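/- arXiv:1201.4459 — 3 statements merged into one kernel-verified Lean document; each statement's English description precedes it below -/
import Mathlib

section
/- The rectangular grid graph R(m,n) has a Hamiltonian cycle if and only if m·n is even and both m > 1 and n > 1. -/
/-- The infinite two-dimensional integer grid graph: vertices are points of `ℤ × ℤ`,
with an edge between two points at distance 1. -/
def GInf : SimpleGraph (ℤ × ℤ) where
  Adj u v := (u.1 - v.1).natAbs + (u.2 - v.2).natAbs = 1
  symm := ⟨by intro u v h; omega⟩
  loopless := ⟨by intro v h; omega⟩

/-- A vertex is white if the sum of its coordinates is even (otherwise it is black). -/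
def White (v : ℤ × ℤ) : Prop := Even (v.1 + v.2)

/-- The vertex set of the rectangular grid graph `R(m,n)`. -/
def RectV (m n : ℕ) : Set (ℤ × ℤ) :=
  {v | 1 ≤ v.1 ∧ v.1 ≤ (m : ℤ) ∧ 1 ≤ v.2 ∧ v.2 ≤ (n : ℤ)}

/-- The rectangular grid graph `R(m,n)`. -/
def R (m n : ℕ) : SimpleGraph (RectV m n) := GInf.induce (RectV m n)

open SimpleGraph

lemma R_adj {m n : ℕ} {u v : RectV m n} :
    (R m n).Adj u v ↔ ((u : ℤ × ℤ).1 - (v : ℤ × ℤ).1).natAbs + ((u : ℤ × ℤ).2 - (v : ℤ × ℤ).2).natAbs = 1 :=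
  Iff.rfl

def rectFn (m n : ℕ) (x : Fin m × Fin n) : RectV m n :=
  ⟨(((x.1 : ℕ) : ℤ) + 1, ((x.2 : ℕ) : ℤ) + 1), by
    have h1 := x.1.isLt; have h2 := x.2.isLt
    refine ⟨by omega, by omega, by omega, by omega⟩⟩

lemma rectFn_bijective (m n : ℕ) : Function.Bijective (rectFn m n) := by
  constructor
  · rintro ⟨i, j⟩ ⟨i', j'⟩ h
    simp only [rectFn, Subtype.mk.injEq, Prod.mk.injEq] at h
    have : (i : ℕ) = (i' : ℕ) ∧ (j : ℕ) = (j' : ℕ) := by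
      have h' := congrArg Subtype.val h; simp only [rectFn, Prod.mk.injEq] at h'; omega
    ext
    · exact this.1
    · exact this.2
  · rintro ⟨⟨a, b⟩, h1, h2, h3, h4⟩
    simp only [Set.mem_setOf_eq] at h1 h2 h3 h4
    refine ⟨(⟨(a - 1).toNat, by omega⟩, ⟨(b - 1).toNat, by omega⟩), ?_⟩
    apply Subtype.ext
    simp only [rectFn, Prod.mk.injEq]
    constructor <;> omega

noncomputable instance rectVFintype (m n : ℕ) : Fintype (RectV m n) :=
  Fintype.ofBijective _ (rectFn_bijective m n)

lemma card_rectV (m n : ℕ) : Fintype.card (RectV m n) = m * n := by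
  rw [← Fintype.card_of_bijective (rectFn_bijective m n)]
  simp

lemma walk_parity {m n : ℕ} : ∀ {u v : RectV m n} (p : (R m n).Walk u v),
    ((u : ℤ × ℤ).1 + (u : ℤ × ℤ).2) % 2 = ((v : ℤ × ℤ).1 + (v : ℤ × ℤ).2 + p.length) % 2
  | _, _, SimpleGraph.Walk.nil => by simp
  | u, v, @SimpleGraph.Walk.cons _ _ _ w _ h p => by
      have h' : ((u : ℤ × ℤ).1 - (w : ℤ × ℤ).1).natAbs + ((u : ℤ × ℤ).2 - (w : ℤ × ℤ).2).natAbs = 1 := h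
      have ih := walk_parity p
      simp only [SimpleGraph.Walk.length_cons]
      push_cast at ih ⊢
      omega

variable {V : Type*}

def mkWalk (G : SimpleGraph V) (f : ℕ → V) :
    (k s : ℕ) → (∀ t, s ≤ t → t < s + k → G.Adj (f t) (f (t + 1))) → G.Walk (f s) (f (s + k))
  | 0, s, _ => SimpleGraph.Walk.nil
  | k + 1, s, hf =>
      SimpleGraph.Walk.cons (hf s le_rfl (by omega))
        ((mkWalk G f k (s + 1) (fun t h1 h2 => hf t (by omega) (by omega))).copy rfl
          (congrArg f (by omega)))

lemma mkWalk_support (G : SimpleGraph V) (f : ℕ → V) :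
    ∀ (k s : ℕ) (hf : ∀ t, s ≤ t → t < s + k → G.Adj (f t) (f (t + 1))),
      (mkWalk G f k s hf).support = (List.range (k + 1)).map (fun i => f (s + i))
  | 0, s, hf => by simp [mkWalk, List.range_succ]
  | k + 1, s, hf => by
      rw [mkWalk]
      rw [SimpleGraph.Walk.support_cons, SimpleGraph.Walk.support_copy,
        mkWalk_support G f k (s + 1)]
      conv_rhs => rw [List.range_succ_eq_map]
      rw [List.map_cons, List.map_map]
      congr 1
      apply List.map_congr_left
      intro a _
      simp only [Function.comp_apply, Nat.succ_eq_add_one]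
      exact congrArg f (by omega)

lemma mkWalk_edges (G : SimpleGraph V) (f : ℕ → V) :
    ∀ (k s : ℕ) (hf : ∀ t, s ≤ t → t < s + k → G.Adj (f t) (f (t + 1))),
      (mkWalk G f k s hf).edges = (List.range k).map (fun i => s(f (s + i), f (s + i + 1)))
  | 0, s, hf => by simp [mkWalk]
  | k + 1, s, hf => by
      rw [mkWalk]
      rw [SimpleGraph.Walk.edges_cons, SimpleGraph.Walk.edges_copy,
        mkWalk_edges G f k (s + 1)]
      conv_rhs => rw [List.range_succ_eq_map]
      rw [List.map_cons, List.map_map]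
      congr 1
      apply List.map_congr_left
      intro a _
      simp only [Function.comp_apply, Nat.succ_eq_add_one]
      have e : s + 1 + a = s + (a + 1) := by omega
      rw [e]

lemma ham_of_fn [DecidableEq V] [Fintype V] (G : SimpleGraph V) (f : ℕ → V) (L : ℕ)
    (hL3 : 3 ≤ L) (hcard : Fintype.card V = L)
    (hadj : ∀ t, t < L → G.Adj (f t) (f (t + 1)))
    (hinj : ∀ i j, i < L → j < L → f i = f j → i = j)
    (hclose : f L = f 0) :
    ∃ (a : V) (p : G.Walk a a), p.IsHamiltonianCycle := by
  have hq0 : ∀ t, 1 ≤ t → t < 1 + (L - 1) → G.Adj (f t) (f (t + 1)) :=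
    fun t h1 h2 => hadj t (by omega)
  let q : G.Walk (f 1) (f 0) :=
    (mkWalk G f (L - 1) 1 hq0).copy rfl (by rw [show 1 + (L - 1) = L by omega, hclose])
  let p : G.Walk (f 0) (f 0) := SimpleGraph.Walk.cons (hadj 0 (by omega)) q
  refine ⟨f 0, p, ?_⟩
  have hsupq : q.support = (List.range L).map (fun i => f (1 + i)) := by
    show ((mkWalk G f (L - 1) 1 hq0).copy _ _).support = _
    rw [SimpleGraph.Walk.support_copy, mkWalk_support]
    congr 2
    omega
  have hinj' : ∀ i j, i < L → j < L → f (1 + i) = f (1 + j) → i = j := by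
    intro i j hi hj hfe
    rcases eq_or_lt_of_le (show 1 + i ≤ L by omega) with h | h
    · rcases eq_or_lt_of_le (show 1 + j ≤ L by omega) with h' | h'
      · omega
      · exfalso
        have : f 0 = f (1 + j) := by rw [← hclose, ← h]; exact hfe
        have := hinj 0 (1 + j) (by omega) h' this
        omega
    · rcases eq_or_lt_of_le (show 1 + j ≤ L by omega) with h' | h'
      · exfalso
        have : f (1 + i) = f 0 := by rw [← hclose, ← h']; exact hfe
        have := hinj (1 + i) 0 h (by omega) this
        omega
      · have := hinj (1 + i) (1 + j) h h' hfe
        omega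
  have hnodup : q.support.Nodup := by
    rw [hsupq]
    refine List.Nodup.map_on ?_ (List.nodup_range (n := L))
    intro x hx y hy h
    exact hinj' x y (List.mem_range.mp hx) (List.mem_range.mp hy) h
  have hpath : q.IsPath := SimpleGraph.Walk.IsPath.mk' hnodup
  have hedgq : q.edges = (List.range (L - 1)).map (fun i => s(f (1 + i), f (1 + i + 1))) := by
    show ((mkWalk G f (L - 1) 1 hq0).copy _ _).edges = _
    rw [SimpleGraph.Walk.edges_copy, mkWalk_edges]
  have hnotmem : s(f 0, f 1) ∉ q.edges := by
    rw [hedgq]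
    simp only [List.mem_map, List.mem_range]
    rintro ⟨i, hi, he⟩
    rw [Sym2.eq_iff] at he
    rcases he with ⟨h1, h2⟩ | ⟨h1, h2⟩
    · exact absurd (hinj (1 + i) 0 (by omega) (by omega) h1) (by omega)
    · have hi0 : i = 0 := hinj' i 0 (by omega) (by omega) h1
      rw [hi0] at h2
      exact absurd (hinj 2 0 (by omega) (by omega) h2) (by omega)
  have hcyc : p.IsCycle :=
    (SimpleGraph.Walk.cons_isCycle_iff q (hadj 0 (by omega))).mpr ⟨hpath, hnotmem⟩
  rw [SimpleGraph.Walk.isHamiltonianCycle_iff_isCycle_and_support_count_tail_eq_one]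
  refine ⟨hcyc, fun v => ?_⟩
  have htail : p.support.tail = q.support := by
    show (SimpleGraph.Walk.cons _ q).support.tail = q.support
    rw [SimpleGraph.Walk.support_cons, List.tail_cons]
  rw [htail]
  have hbij : Function.Bijective (fun i : Fin L => f (1 + (i : ℕ))) := by
    rw [Fintype.bijective_iff_injective_and_card]
    constructor
    · intro i j h
      exact Fin.ext (hinj' i j i.isLt j.isLt h)
    · simp [hcard]
  obtain ⟨i, hi⟩ := hbij.surjective v
  refine List.count_eq_one_of_mem hnodup (by rw [hsupq] at hnodup ⊢; exact List.mem_map.mpr ⟨i, List.mem_range.mpr i.isLt, hi⟩)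

lemma even_of_ham {m n : ℕ} (a : RectV m n) (p : (R m n).Walk a a)
    (hp : p.IsHamiltonianCycle) : Even (m * n) := by
  classical
  have h1 := walk_parity p
  have h2 : p.length = m * n := by rw [hp.length_eq, card_rectV]
  rw [h2] at h1
  rw [Nat.even_iff]
  omega

lemma not_ham_one (n : ℕ) (a : RectV 1 n) (p : (R 1 n).Walk a a)
    (hp : p.IsHamiltonianCycle) : False := by
  classical
  have hlen : p.length = n := by rw [hp.length_eq, card_rectV, one_mul]
  have h3 : 3 ≤ n := hlen ▸ hp.isCycle.three_le_length
  set g : Sym2 (RectV 1 n) → ℤ :=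
    Sym2.lift ⟨fun u v => min (u : ℤ × ℤ).2 (v : ℤ × ℤ).2, fun u v => min_comm _ _⟩ with hg
  have key : ∀ u v : RectV 1 n, (R 1 n).Adj u v →
      (u : ℤ × ℤ).1 = 1 ∧ (v : ℤ × ℤ).1 = 1 ∧ ((u : ℤ × ℤ).2 - (v : ℤ × ℤ).2).natAbs = 1 := by
    intro u v huv
    have h1 := u.2.1; have h2 := u.2.2.1; have h3 := v.2.1; have h4 := v.2.2.1
    have h5 := u.2.2.2.1; have h6 := v.2.2.2.1
    have := R_adj.mp huv
    push_cast at h2 h4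
    omega
  have hinj : ∀ e ∈ p.edges, ∀ e' ∈ p.edges, g e = g e' → e = e' := by
    intro e he e' he'
    induction e using Sym2.inductionOn with
    | hf u v =>
      induction e' using Sym2.inductionOn with
      | hf u' v' =>
        intro hge
        obtain ⟨k1, k2, k3⟩ := key u v (p.adj_of_mem_edges he)
        obtain ⟨k1', k2', k3'⟩ := key u' v' (p.adj_of_mem_edges he')
        simp only [hg, Sym2.lift_mk] at hge
        rw [min_def, min_def] at hge
        rw [Sym2.eq_iff]
        have hcase : ((u : ℤ × ℤ).2 = (u' : ℤ × ℤ).2 ∧ (v : ℤ × ℤ).2 = (v' : ℤ × ℤ).2) ∨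
            ((u : ℤ × ℤ).2 = (v' : ℤ × ℤ).2 ∧ (v : ℤ × ℤ).2 = (u' : ℤ × ℤ).2) := by
          split_ifs at hge <;> omega
        have uext : ∀ (w z : RectV 1 n), (w : ℤ × ℤ).1 = 1 → (z : ℤ × ℤ).1 = 1 →
            (w : ℤ × ℤ).2 = (z : ℤ × ℤ).2 → w = z := by
          intro w z hw hz hwz
          apply Subtype.ext
          apply Prod.ext <;> simp_all
        rcases hcase with ⟨c1, c2⟩ | ⟨c1, c2⟩
        · exact Or.inl ⟨uext u u' k1 k1' c1, uext v v' k2 k2' c2⟩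
        · exact Or.inr ⟨uext u v' k1 k2' c1, uext v u' k2 k1' c2⟩
  have hbnd : ∀ e ∈ p.edges, g e ∈ Finset.Icc (1 : ℤ) ((n : ℤ) - 1) := by
    intro e he
    induction e using Sym2.inductionOn with
    | hf u v =>
      obtain ⟨k1, k2, k3⟩ := key u v (p.adj_of_mem_edges he)
      have h1 := u.2.2.2.1; have h2 := u.2.2.2.2; have h3 := v.2.2.2.1; have h4 := v.2.2.2.2
      simp only [hg, Sym2.lift_mk, Finset.mem_Icc]
      constructor <;> [skip; skip] <;> rw [min_def] <;> split_ifs <;> omega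
  have hnd : (p.edges.map g).Nodup :=
    List.Nodup.map_on hinj hp.isCycle.isTrail.edges_nodup
  have hsub : (p.edges.map g).toFinset ⊆ Finset.Icc (1 : ℤ) ((n : ℤ) - 1) := by
    intro x hx
    rw [List.mem_toFinset, List.mem_map] at hx
    obtain ⟨e, he, rfl⟩ := hx
    exact hbnd e he
  have hcardle := Finset.card_le_card hsub
  rw [List.toFinset_card_of_nodup hnd, List.length_map, SimpleGraph.Walk.length_edges, hlen,
    Int.card_Icc] at hcardle
  omega

def swapIso (m n : ℕ) : R m n ≃g R n m where
  toFun := fun u => ⟨((u : ℤ × ℤ).2, (u : ℤ × ℤ).1), ⟨u.2.2.2.1, u.2.2.2.2, u.2.1, u.2.2.1⟩⟩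
  invFun := fun u => ⟨((u : ℤ × ℤ).2, (u : ℤ × ℤ).1), ⟨u.2.2.2.1, u.2.2.2.2, u.2.1, u.2.2.1⟩⟩
  left_inv := fun u => by apply Subtype.ext; simp
  right_inv := fun u => by apply Subtype.ext; simp
  map_rel_iff' := by
    intro u v
    constructor <;>
      (intro h; have h' := R_adj.mp h; refine R_adj.mpr ?_; simp only [Equiv.coe_fn_mk] at h' ⊢; omega)

lemma ham_swap {m n : ℕ} (h : ∃ (a : RectV m n) (p : (R m n).Walk a a), p.IsHamiltonianCycle) :
    ∃ (b : RectV n m) (q : (R n m).Walk b b), q.IsHamiltonianCycle := by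
  classical
  obtain ⟨a, p, hp⟩ := h
  exact ⟨_, p.map (swapIso m n).toHom, hp.map (swapIso m n).bijective⟩

lemma GInf_adj {u v : ℤ × ℤ} :
    GInf.Adj u v ↔ (u.1 - v.1).natAbs + (u.2 - v.2).natAbs = 1 := Iff.rfl

def snake (m n : ℕ) (t : ℕ) : ℤ × ℤ :=
  if t < n then (1, (t : ℤ) + 1)
  else if t < n + (m - 1) * (n - 1) then
    ((((t - n) / (n - 1) : ℕ) : ℤ) + 2,
      if (t - n) / (n - 1) % 2 = 0 then (n : ℤ) - (((t - n) % (n - 1) : ℕ) : ℤ)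
      else (((t - n) % (n - 1) : ℕ) : ℤ) + 2)
  else ((m : ℤ) - (((t - (n + (m - 1) * (n - 1))) : ℕ) : ℤ), 1)

section snakelemmas

variable {m n : ℕ}

lemma hsplit (hm : 2 ≤ m) (hn : 2 ≤ n) : n + (m - 1) * (n - 1) + (m - 1) = m * n := by
  obtain ⟨m', rfl⟩ : ∃ m', m = m' + 2 := ⟨m - 2, by omega⟩
  obtain ⟨n', rfl⟩ : ∃ n', n = n' + 2 := ⟨n - 2, by omega⟩
  show n' + 2 + (m' + 1) * (n' + 1) + (m' + 1) = (m' + 2) * (n' + 2)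
  ring

lemma snake_eval1 {t : ℕ} (ht : t < n) : snake m n t = (1, (t : ℤ) + 1) := by
  unfold snake; rw [if_pos ht]

lemma middle_div (hn : 2 ≤ n) (c r : ℕ) (hr : r < n - 1) :
    ((n - 1) * c + r) / (n - 1) = c ∧ ((n - 1) * c + r) % (n - 1) = r := by
  rw [Nat.add_comm]
  constructor
  · rw [Nat.add_mul_div_left _ _ (show 0 < n - 1 by omega), Nat.div_eq_of_lt hr]; omega
  · rw [Nat.add_mul_mod_self_left, Nat.mod_eq_of_lt hr]

lemma snake_eval_mid (hm : 2 ≤ m) (hn : 2 ≤ n) (c r : ℕ) (hc : c ≤ m - 2) (hr : r < n - 1) :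
    snake m n (n + ((n - 1) * c + r)) =
      ((c : ℤ) + 2, if c % 2 = 0 then (n : ℤ) - (r : ℤ) else (r : ℤ) + 2) := by
  have h2 : (n - 1) * c + r < (m - 1) * (n - 1) := by
    have e1 : (n - 1) * c + (n - 1) = (n - 1) * (c + 1) := by ring
    have e2 : (n - 1) * (c + 1) ≤ (n - 1) * (m - 1) := Nat.mul_le_mul_left _ (by omega)
    have e3 : (n - 1) * (m - 1) = (m - 1) * (n - 1) := Nat.mul_comm _ _
    omega
  unfold snake
  rw [if_neg (by omega), if_pos (by omega)]
  have h3 : n + ((n - 1) * c + r) - n = (n - 1) * c + r := by omega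
  rw [h3, (middle_div hn c r hr).1, (middle_div hn c r hr).2]

lemma snake_eval_bot (b : ℕ) :
    snake m n (n + (m - 1) * (n - 1) + b) = ((m : ℤ) - (b : ℤ), 1) := by
  unfold snake
  rw [if_neg (by omega), if_neg (by omega)]
  congr 2
  omega

lemma mid_decomp {m n : ℕ} (hm : 2 ≤ m) (hn : 2 ≤ n) (t : ℕ) (h1 : n ≤ t)
    (h2 : t < n + (m - 1) * (n - 1)) :
    ∃ c r, r < n - 1 ∧ c < m - 1 ∧ t = n + ((n - 1) * c + r) := by
  refine ⟨(t - n) / (n - 1), (t - n) % (n - 1), Nat.mod_lt _ (by omega),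
    (Nat.div_lt_iff_lt_mul (show 0 < n - 1 by omega)).mpr (by omega), ?_⟩
  have hdm := Nat.div_add_mod (t - n) (n - 1)
  omega

lemma snake_mem (hm : 2 ≤ m) (hn : 2 ≤ n) : ∀ t ≤ m * n, snake m n t ∈ RectV m n := by
  intro t ht
  have hs := hsplit hm hn
  by_cases h1 : t < n
  · rw [snake_eval1 h1]
    exact ⟨by omega, by omega, by omega, by omega⟩
  · by_cases h2 : t < n + (m - 1) * (n - 1)
    · obtain ⟨c, r, hr, hc, he⟩ := mid_decomp hm hn t (by omega) h2
      rw [he, snake_eval_mid hm hn c r (by omega) hr]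
      refine ⟨by omega, by omega, ?_, ?_⟩ <;>
        · dsimp only
          split_ifs <;> omega
    · have he : t = n + (m - 1) * (n - 1) + (t - (n + (m - 1) * (n - 1))) := by omega
      rw [he, snake_eval_bot]
      exact ⟨by omega, by omega, by omega, by omega⟩

lemma snake_adj (hm : 2 ≤ m) (hn : 2 ≤ n) (hme : Even m) :
    ∀ t < m * n, GInf.Adj (snake m n t) (snake m n (t + 1)) := by
  have hs := hsplit hm hn
  have hm2 : m % 2 = 0 := Nat.even_iff.mp hme
  intro t ht
  rw [GInf_adj]
  by_cases h1 : t + 1 < n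
  · rw [snake_eval1 (by omega), snake_eval1 h1]
    push_cast; omega
  · by_cases h1' : t + 1 = n
    · rw [snake_eval1 (by omega)]
      have he : t + 1 = n + ((n - 1) * 0 + 0) := by omega
      rw [he, snake_eval_mid hm hn 0 0 (by omega) (by omega)]
      rw [if_pos (by omega)]
      push_cast; omega
    · by_cases h2 : t < n + (m - 1) * (n - 1)
      · obtain ⟨c, r, hr, hc, he⟩ := mid_decomp hm hn t (by omega) h2
        by_cases hrr : r + 1 < n - 1
        · have he' : t + 1 = n + ((n - 1) * c + (r + 1)) := by omega
          rw [he', he, snake_eval_mid hm hn c r (by omega) hr,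
            snake_eval_mid hm hn c (r + 1) (by omega) hrr]
          by_cases hp : c % 2 = 0
          · rw [if_pos hp, if_pos hp]; omega
          · rw [if_neg hp, if_neg hp]; omega
        · have hr1 : r + 1 = n - 1 := by omega
          have e1 : (n - 1) * (c + 1) = (n - 1) * c + (n - 1) := by ring
          by_cases hcc : c + 1 < m - 1
          · have he' : t + 1 = n + ((n - 1) * (c + 1) + 0) := by omega
            rw [he', he, snake_eval_mid hm hn c r (by omega) hr,
              snake_eval_mid hm hn (c + 1) 0 (by omega) (by omega)]
            by_cases hp : c % 2 = 0
            · rw [if_pos hp, if_neg (by omega)]; omega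
            · rw [if_neg hp, if_pos (by omega)]; omega
          · have hcm : c = m - 2 := by omega
            have e2 : (n - 1) * c + (n - 1) = (m - 1) * (n - 1) := by
              subst hcm
              obtain ⟨m', rfl⟩ : ∃ m', m = m' + 2 := ⟨m - 2, by omega⟩
              obtain ⟨n', rfl⟩ : ∃ n', n = n' + 2 := ⟨n - 2, by omega⟩
              show (n' + 1) * m' + (n' + 1) = (m' + 1) * (n' + 1)
              ring
            have he' : t + 1 = n + (m - 1) * (n - 1) + 0 := by omega
            rw [he', he, snake_eval_mid hm hn c r (by omega) hr, snake_eval_bot]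
            rw [if_pos (by omega)]
            omega
      · have he : t = n + (m - 1) * (n - 1) + (t - (n + (m - 1) * (n - 1))) := by omega
        have he' : t + 1 = n + (m - 1) * (n - 1) + (t - (n + (m - 1) * (n - 1)) + 1) := by omega
        rw [he', he, snake_eval_bot, snake_eval_bot]
        push_cast; omega

lemma snake_inj (hm : 2 ≤ m) (hn : 2 ≤ n) :
    ∀ i j, i < m * n → j < m * n → snake m n i = snake m n j → i = j := by
  have hs := hsplit hm hn
  intro i j hi hj he
  rcases lt_or_ge i n with h1 | h1 <;> rcases lt_or_ge j n with h2 | h2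
  · rw [snake_eval1 h1, snake_eval1 h2, Prod.mk.injEq] at he
    omega
  · rcases lt_or_ge j (n + (m - 1) * (n - 1)) with h3 | h3
    · obtain ⟨c, r, hr, hc, hej⟩ := mid_decomp hm hn j h2 h3
      rw [snake_eval1 h1, hej, snake_eval_mid hm hn c r (by omega) hr, Prod.mk.injEq] at he
      exfalso; have := he.1; omega
    · have hej : j = n + (m - 1) * (n - 1) + (j - (n + (m - 1) * (n - 1))) := by omega
      rw [snake_eval1 h1, hej, snake_eval_bot, Prod.mk.injEq] at he
      exfalso
      have h4 := he.1
      have hb : j - (n + (m - 1) * (n - 1)) < m - 1 := by omega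
      omega
  · rcases lt_or_ge i (n + (m - 1) * (n - 1)) with h3 | h3
    · obtain ⟨c, r, hr, hc, hei⟩ := mid_decomp hm hn i h1 h3
      rw [snake_eval1 h2, hei, snake_eval_mid hm hn c r (by omega) hr, Prod.mk.injEq] at he
      exfalso; have := he.1; omega
    · have hei : i = n + (m - 1) * (n - 1) + (i - (n + (m - 1) * (n - 1))) := by omega
      rw [snake_eval1 h2, hei, snake_eval_bot, Prod.mk.injEq] at he
      exfalso
      have h4 := he.1
      have hb : i - (n + (m - 1) * (n - 1)) < m - 1 := by omega
      omega
  · rcases lt_or_ge i (n + (m - 1) * (n - 1)) with h3 | h3 <;>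
      rcases lt_or_ge j (n + (m - 1) * (n - 1)) with h4 | h4
    · obtain ⟨ci, ri, hri, hci, hei⟩ := mid_decomp hm hn i h1 h3
      obtain ⟨cj, rj, hrj, hcj, hej⟩ := mid_decomp hm hn j h2 h4
      rw [hei, hej, snake_eval_mid hm hn ci ri (by omega) hri,
        snake_eval_mid hm hn cj rj (by omega) hrj, Prod.mk.injEq] at he
      obtain ⟨hx, hy⟩ := he
      have hcc : ci = cj := by omega
      rw [← hcc] at hy
      have hmm : (n - 1) * ci = (n - 1) * cj := by rw [hcc]
      have hrr : ri = rj := by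
        by_cases hp : ci % 2 = 0
        · rw [if_pos hp, if_pos hp] at hy; omega
        · rw [if_neg hp, if_neg hp] at hy; omega
      omega
    · obtain ⟨ci, ri, hri, hci, hei⟩ := mid_decomp hm hn i h1 h3
      have hej : j = n + (m - 1) * (n - 1) + (j - (n + (m - 1) * (n - 1))) := by omega
      rw [hei, hej, snake_eval_mid hm hn ci ri (by omega) hri, snake_eval_bot,
        Prod.mk.injEq] at he
      exfalso; have h5 := he.2
      split_ifs at h5 <;> omega
    · obtain ⟨cj, rj, hrj, hcj, hej⟩ := mid_decomp hm hn j h2 h4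
      have hei : i = n + (m - 1) * (n - 1) + (i - (n + (m - 1) * (n - 1))) := by omega
      rw [hei, hej, snake_eval_mid hm hn cj rj (by omega) hrj, snake_eval_bot,
        Prod.mk.injEq] at he
      exfalso; have h5 := he.2
      split_ifs at h5 <;> omega
    · have hei : i = n + (m - 1) * (n - 1) + (i - (n + (m - 1) * (n - 1))) := by omega
      have hej : j = n + (m - 1) * (n - 1) + (j - (n + (m - 1) * (n - 1))) := by omega
      rw [hei, hej, snake_eval_bot, snake_eval_bot, Prod.mk.injEq] at he
      have := he.1
      omega

lemma snake_closed (hm : 2 ≤ m) (hn : 2 ≤ n) : snake m n (m * n) = snake m n 0 := by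
  have hs := hsplit hm hn
  have he : m * n = n + (m - 1) * (n - 1) + (m - 1) := by omega
  rw [he, snake_eval_bot, snake_eval1 (by omega)]
  rw [Prod.mk.injEq]
  constructor
  · omega
  · omega

end snakelemmas

lemma ham_exists (m n : ℕ) (hm : 2 ≤ m) (hn : 2 ≤ n) (hme : Even m) :
    ∃ (a : RectV m n) (p : (R m n).Walk a a), p.IsHamiltonianCycle := by
  classical
  have hL4 : 4 ≤ m * n := le_trans (by norm_num) (Nat.mul_le_mul hm hn)
  let f : ℕ → RectV m n :=
    fun t => ⟨snake m n (min t (m * n)), snake_mem hm hn _ (min_le_right _ _)⟩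
  apply ham_of_fn (R m n) f (m * n) (by omega) (card_rectV m n)
  · intro t ht
    refine R_adj.mpr ?_
    show ((snake m n (min t (m * n))).1 - (snake m n (min (t + 1) (m * n))).1).natAbs
        + ((snake m n (min t (m * n))).2 - (snake m n (min (t + 1) (m * n))).2).natAbs = 1
    rw [min_eq_left (by omega), min_eq_left (by omega)]
    exact GInf_adj.mp (snake_adj hm hn hme t ht)
  · intro i j hi hj hf
    have h := congrArg Subtype.val hf
    show i = j
    have h' : snake m n (min i (m * n)) = snake m n (min j (m * n)) := h
    rw [min_eq_left (by omega), min_eq_left (by omega)] at h'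
    exact snake_inj hm hn i j hi hj h'
  · apply Subtype.ext
    show snake m n (min (m * n) (m * n)) = snake m n (min 0 (m * n))
    rw [min_self, min_eq_left (Nat.zero_le _)]
    exact snake_closed hm hn

/-- `R(m,n)` has a Hamiltonian cycle iff m·n is even and m > 1 and n > 1. -/
theorem ham_cycle_iff (m n : ℕ) :
    (∃ (a : RectV m n) (p : (R m n).Walk a a), p.IsHamiltonianCycle) ↔
      (Even (m * n) ∧ 1 < m ∧ 1 < n) := by
  constructor
  · rintro ⟨a, p, hp⟩
    have ha1 := a.2.1
    have ha2 := a.2.2.1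
    have ha3 := a.2.2.2.1
    have ha4 := a.2.2.2.2
    have hm1 : 1 ≤ m := by omega
    have hn1 : 1 ≤ n := by omega
    refine ⟨even_of_ham a p hp, ?_, ?_⟩
    · rcases Nat.lt_or_ge 1 m with h | h
      · exact h
      · exfalso
        have hm_eq : m = 1 := by omega
        subst hm_eq
        exact not_ham_one n a p hp
    · rcases Nat.lt_or_ge 1 n with h | h
      · exact h
      · exfalso
        have hn_eq : n = 1 := by omega
        subst hn_eq
        obtain ⟨b, q, hq⟩ := ham_swap ⟨a, p, hp⟩
        exact not_ham_one m b q hq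
  · rintro ⟨he, hm, hn⟩
    rcases Nat.even_mul.mp he with h | h
    · exact ham_exists m n hm hn h
    · exact ham_swap (ham_exists n m hn hm h)
end

section
/- In the 2-rectangle R(m,2) with m ≥ 2, if s and t are adjacent vertices and the edge (s,t) is not on the outer boundary (i.e., (s,t) is a vertical edge with 1 < s_x = t_x < m), then there is no Hamiltonian path between s and t. -/
lemma support_get_eq_getVert {V : Type*} {G : SimpleGraph V} :
    ∀ {u v : V} (p : G.Walk u v) (i : ℕ) (h : i < p.support.length),
      p.support.get ⟨i, h⟩ = p.getVert i := by
  intro u v p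
  induction p with
  | nil => intro i h; simp at h; subst h; rfl
  | cons hadj q ih =>
    intro i h
    cases i with
    | zero => rfl
    | succ n =>
      simp only [SimpleGraph.Walk.support_cons, List.get_cons_succ,
        SimpleGraph.Walk.getVert_cons_succ]
      exact ih n (by simpa [SimpleGraph.Walk.support_cons] using Nat.lt_of_succ_lt_succ h)

lemma getVert_injOn {V : Type*} {G : SimpleGraph V} {u v : V} {p : G.Walk u v}
    (hnd : p.support.Nodup) {i j : ℕ} (hi : i ≤ p.length) (hj : j ≤ p.length)
    (h : p.getVert i = p.getVert j) : i = j := by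
  have hl : p.support.length = p.length + 1 := by
    simp [SimpleGraph.Walk.length_support]
  have hi' : i < p.support.length := by omega
  have hj' : j < p.support.length := by omega
  have := (List.Nodup.get_inj_iff hnd (i := ⟨i, hi'⟩) (j := ⟨j, hj'⟩)).mp
    (by rw [support_get_eq_getVert, support_get_eq_getVert]; exact h)
  exact congrArg Fin.val this

lemma int_ivt (f : ℕ → ℤ) (h : ∀ k, (f (k + 1) - f k).natAbs ≤ 1) (x : ℤ) :
    ∀ d i, f i ≤ x → x ≤ f (i + d) → ∃ k, i ≤ k ∧ k ≤ i + d ∧ f k = x := by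
  intro d
  induction d with
  | zero =>
    intro i h1 h2
    simp only [Nat.add_zero] at h2
    exact ⟨i, le_refl _, by omega, by omega⟩
  | succ d ih =>
    intro i h1 h2
    by_cases hc : x ≤ f (i + d)
    · obtain ⟨k, hk1, hk2, hk3⟩ := ih i h1 hc
      exact ⟨k, hk1, by omega, hk3⟩
    · have := h (i + d)
      refine ⟨i + d + 1, by omega, by omega, ?_⟩
      push_neg at hc
      have h2' : x ≤ f (i + d + 1) := by
        have heq : i + (d + 1) = i + d + 1 := by omega
        rwa [heq] at h2
      omega

lemma int_ivt' (f : ℕ → ℤ) (h : ∀ k, (f (k + 1) - f k).natAbs ≤ 1) (x : ℤ) :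
    ∀ d i, x ≤ f i → f (i + d) ≤ x → ∃ k, i ≤ k ∧ k ≤ i + d ∧ f k = x := by
  intro d
  induction d with
  | zero =>
    intro i h1 h2
    simp only [Nat.add_zero] at h2
    exact ⟨i, le_refl _, by omega, by omega⟩
  | succ d ih =>
    intro i h1 h2
    by_cases hc : f (i + d) ≤ x
    · obtain ⟨k, hk1, hk2, hk3⟩ := ih i h1 hc
      exact ⟨k, hk1, by omega, hk3⟩
    · have := h (i + d)
      refine ⟨i + d + 1, by omega, by omega, ?_⟩
      push_neg at hc
      have h2' : f (i + d + 1) ≤ x := by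
        have heq : i + (d + 1) = i + d + 1 := by omega
        rwa [heq] at h2
      omega

/-- In `R(m,2)` (m ≥ 2), if (s,t) is a nonboundary vertical edge
(s = (x,1), t = (x,2) with 1 < x < m), there is no Hamiltonian path from s to t. -/
theorem no_ham_path_nonboundary_edge (m : ℕ) (hm : 2 ≤ m) (x : ℤ)
    (hx1 : 1 < x) (hxm : x < m)
    (hs : ((x, (1 : ℤ))) ∈ RectV m 2) (ht : ((x, (2 : ℤ))) ∈ RectV m 2)
    (p : (R m 2).Walk ⟨(x, 1), hs⟩ ⟨(x, 2), ht⟩) : ¬ p.IsHamiltonian := by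
  intro hp
  have hnd : p.support.Nodup := hp.isPath.support_nodup
  -- the left and right witness vertices
  have haV : ((x - 1, (1 : ℤ))) ∈ RectV m 2 := by
    simp only [RectV, Set.mem_setOf_eq] at hs ⊢; omega
  have hbV : ((x + 1, (1 : ℤ))) ∈ RectV m 2 := by
    simp only [RectV, Set.mem_setOf_eq] at hs ⊢
    refine ⟨by omega, by omega, by norm_num⟩
  set a : RectV m 2 := ⟨(x - 1, 1), haV⟩
  set b : RectV m 2 := ⟨(x + 1, 1), hbV⟩
  have hamem : a ∈ p.support := hp.mem_support a
  have hbmem : b ∈ p.support := hp.mem_support b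
  obtain ⟨i, hia, hil⟩ := SimpleGraph.Walk.mem_support_iff_exists_getVert.mp hamem
  obtain ⟨j, hjb, hjl⟩ := SimpleGraph.Walk.mem_support_iff_exists_getVert.mp hbmem
  set f : ℕ → ℤ := fun k => ((p.getVert k : RectV m 2) : ℤ × ℤ).1 with hf
  have hstep : ∀ k, (f (k + 1) - f k).natAbs ≤ 1 := by
    intro k
    by_cases hk : k < p.length
    · have hadj := p.adj_getVert_succ hk
      have hadj' : GInf.Adj ((p.getVert k : RectV m 2) : ℤ × ℤ)
          ((p.getVert (k+1) : RectV m 2) : ℤ × ℤ) := hadj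
      simp only [GInf] at hadj'
      simp only [hf]
      omega
    · push_neg at hk
      have h1 : p.getVert (k + 1) = p.getVert k := by
        rw [p.getVert_of_length_le hk, p.getVert_of_length_le (by omega)]
      simp [hf, h1]
  have hfi : f i = x - 1 := by simp [hf, hia, a]
  have hfj : f j = x + 1 := by simp [hf, hjb, b]
  have hf0 : f 0 = x := by simp [hf, p.getVert_zero]
  have hfn : f p.length = x := by simp [hf, p.getVert_length]
  -- i and j are interior indices
  have hi0 : i ≠ 0 := by intro h; rw [h, hf0] at hfi; omega
  have hin : i ≠ p.length := by intro h; rw [h, hfn] at hfi; omega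
  have hj0 : j ≠ 0 := by intro h; rw [h, hf0] at hfj; omega
  have hjn : j ≠ p.length := by intro h; rw [h, hfn] at hfj; omega
  -- find an interior index k with f k = x
  obtain ⟨k, hk1, hk2, hk3⟩ :
      ∃ k, 0 < k ∧ k < p.length ∧ f k = x := by
    rcases le_or_gt i j with hij | hij
    · obtain ⟨k, hk1, hk2, hk3⟩ := int_ivt f hstep x (j - i) i (by omega)
        (by rw [Nat.add_sub_cancel' hij]; omega)
      exact ⟨k, by omega, by omega, hk3⟩
    · obtain ⟨k, hk1, hk2, hk3⟩ := int_ivt' f hstep x (i - j) j (by omega)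
        (by rw [Nat.add_sub_cancel' hij.le]; omega)
      exact ⟨k, by omega, by omega, hk3⟩
  -- getVert k must be s or t
  have hkprop := (p.getVert k).2
  simp only [RectV, Set.mem_setOf_eq] at hkprop
  have hx : ((p.getVert k : RectV m 2) : ℤ × ℤ).1 = x := hk3
  have hy : ((p.getVert k : RectV m 2) : ℤ × ℤ).2 = 1 ∨
      ((p.getVert k : RectV m 2) : ℤ × ℤ).2 = 2 := by
    have h' : 1 ≤ ((p.getVert k : RectV m 2) : ℤ × ℤ).2 ∧
        ((p.getVert k : RectV m 2) : ℤ × ℤ).2 ≤ ((2 : ℕ) : ℤ) :=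
      ⟨(p.getVert k).2.2.2.1, (p.getVert k).2.2.2.2⟩
    omega
  rcases hy with hy | hy
  · have : p.getVert k = p.getVert 0 := by
      rw [p.getVert_zero]
      apply Subtype.ext
      exact Prod.ext hx (by simpa using hy)
    have := getVert_injOn hnd (by omega) (by omega) this
    omega
  · have : p.getVert k = p.getVert p.length := by
      rw [p.getVert_length]
      apply Subtype.ext
      exact Prod.ext hx (by simpa using hy)
    have := getVert_injOn hnd (by omega) (le_refl _) this
    omega
end

section
/- In the 2-rectangle R(m,2), if s = (s_x,1) and t = (t_x,2) with s_x = t_x and 1 < s_x < m (removing s and t disconnects the graph), then the maximum number of vertices of a path from s to t equals max(s_x + t_x, 2m − s_x − t_x + 2). -/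
lemma mem_RectV {m n : ℕ} {v : ℤ×ℤ} : v ∈ RectV m n ↔ 1 ≤ v.1 ∧ v.1 ≤ (m:ℤ) ∧ 1 ≤ v.2 ∧ v.2 ≤ (n:ℤ) := Iff.rfl

lemma adjR {m n : ℕ} {u v : ℤ×ℤ} (hu : u ∈ RectV m n) (hv : v ∈ RectV m n) :
    (R m n).Adj ⟨u,hu⟩ ⟨v,hv⟩ ↔ (u.1-v.1).natAbs + (u.2-v.2).natAbs = 1 := Iff.rfl

lemma mk_RectV {m n : ℕ} {x y : ℤ} (h1 : 1 ≤ x) (h2 : x ≤ m) (h3 : 1 ≤ y) (h4 : y ≤ n) :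
    ((x,y)) ∈ RectV m n := ⟨h1, h2, h3, h4⟩

lemma RectV_bounds {m n : ℕ} {x y : ℤ} (h : ((x,y)) ∈ RectV m n) :
    1 ≤ x ∧ x ≤ m ∧ 1 ≤ y ∧ y ≤ n := h

lemma ne_of_val {m n : ℕ} {u v : ℤ×ℤ} {hu : u ∈ RectV m n} {hv : v ∈ RectV m n}
    (h : u ≠ v) : (⟨u,hu⟩ : RectV m n) ≠ ⟨v,hv⟩ := by simp [h]

/-- Left U-shaped path: from (a,1) down to (1,1), up, back to (a,2). -/
lemma leftU {m : ℕ} : ∀ n : ℕ, ∀ a : ℤ, a = 1 + n → (a:ℤ) ≤ m →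
    ∀ (hx : ((a,(1:ℤ))) ∈ RectV m 2) (hy : ((a,(2:ℤ))) ∈ RectV m 2),
    ∃ w : (R m 2).Walk ⟨(a,1),hx⟩ ⟨(a,2),hy⟩,
      w.IsPath ∧ w.support.length = 2*(n+1) ∧ ∀ v ∈ w.support, (v:ℤ×ℤ).1 ≤ a := by
  intro n
  induction n with
  | zero =>
    intro a ha ham hx hy
    refine ⟨SimpleGraph.Walk.cons ((adjR hx hy).2 (by simp)) SimpleGraph.Walk.nil, ?_, ?_, ?_⟩
    · rw [SimpleGraph.Walk.isPath_def]
      simp [SimpleGraph.Walk.support_cons]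
    · simp
    · intro v hv
      simp [SimpleGraph.Walk.support_cons] at hv
      rcases hv with h | h <;> simp [h]
  | succ k ih =>
    intro a ha ham hx hy
    have hb := RectV_bounds hx
    have hx' : ((a-1,(1:ℤ))) ∈ RectV m 2 := mk_RectV (by omega) (by omega) (by omega) (by omega)
    have hy' : ((a-1,(2:ℤ))) ∈ RectV m 2 := mk_RectV (by omega) (by omega) (by omega) (by omega)
    obtain ⟨w', hp', hl', hb'⟩ := ih (a-1) (by push_cast at ha ⊢; omega) (by omega) hx' hy'
    have h1 : (R m 2).Adj ⟨(a,1),hx⟩ ⟨(a-1,1),hx'⟩ := (adjR _ _).2 (by simp)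
    have h2 : (R m 2).Adj ⟨(a-1,2),hy'⟩ ⟨(a,2),hy⟩ := (adjR _ _).2 (by simp)
    refine ⟨SimpleGraph.Walk.cons h1 (w'.concat h2), ?_, ?_, ?_⟩
    · rw [SimpleGraph.Walk.isPath_def]
      rw [SimpleGraph.Walk.support_cons, SimpleGraph.Walk.support_concat]
      refine List.nodup_cons.2 ⟨?_, ?_⟩
      · intro h
        rcases List.mem_append.1 h with h | h
        · have := hb' _ h; simp at this
        · simp at h
      · refine List.Nodup.append hp'.support_nodup (List.nodup_singleton _) ?_
        intro x hx1 hx2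
        simp at hx2
        subst hx2
        have := hb' _ hx1; simp at this
    · rw [SimpleGraph.Walk.support_cons, SimpleGraph.Walk.support_concat]
      simp [hl']; omega
    · intro v hv
      rw [SimpleGraph.Walk.support_cons, SimpleGraph.Walk.support_concat] at hv
      simp at hv
      rcases hv with h | h | h
      · simp [h]
      · have := hb' _ h; omega
      · simp [h]

/-- Right U-shaped path: from (a,1) right to (m,1), up, back to (a,2). -/
lemma rightU {m : ℕ} : ∀ n : ℕ, ∀ a : ℤ, 1 ≤ a → a + n = m →
    ∀ (hx : ((a,(1:ℤ))) ∈ RectV m 2) (hy : ((a,(2:ℤ))) ∈ RectV m 2),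
    ∃ w : (R m 2).Walk ⟨(a,1),hx⟩ ⟨(a,2),hy⟩,
      w.IsPath ∧ w.support.length = 2*(n+1) ∧ ∀ v ∈ w.support, a ≤ (v:ℤ×ℤ).1 := by
  intro n
  induction n with
  | zero =>
    intro a h1a ham hx hy
    refine ⟨SimpleGraph.Walk.cons ((adjR hx hy).2 (by simp)) SimpleGraph.Walk.nil, ?_, ?_, ?_⟩
    · rw [SimpleGraph.Walk.isPath_def]
      simp [SimpleGraph.Walk.support_cons]
    · simp
    · intro v hv
      simp [SimpleGraph.Walk.support_cons] at hv
      rcases hv with h | h <;> simp [h]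
  | succ k ih =>
    intro a h1a ham hx hy
    have hb := RectV_bounds hx
    have hx' : ((a+1,(1:ℤ))) ∈ RectV m 2 := mk_RectV (by omega) (by push_cast at ham ⊢; omega) (by omega) (by omega)
    have hy' : ((a+1,(2:ℤ))) ∈ RectV m 2 := mk_RectV (by omega) (by push_cast at ham ⊢; omega) (by omega) (by omega)
    obtain ⟨w', hp', hl', hb'⟩ := ih (a+1) (by omega) (by push_cast at ham ⊢; omega) hx' hy'
    have h1 : (R m 2).Adj ⟨(a,1),hx⟩ ⟨(a+1,1),hx'⟩ := (adjR _ _).2 (by simp)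
    have h2 : (R m 2).Adj ⟨(a+1,2),hy'⟩ ⟨(a,2),hy⟩ := (adjR _ _).2 (by simp)
    refine ⟨SimpleGraph.Walk.cons h1 (w'.concat h2), ?_, ?_, ?_⟩
    · rw [SimpleGraph.Walk.isPath_def]
      rw [SimpleGraph.Walk.support_cons, SimpleGraph.Walk.support_concat]
      refine List.nodup_cons.2 ⟨?_, ?_⟩
      · intro h
        rcases List.mem_append.1 h with h | h
        · have := hb' _ h; simp at this
        · simp at h
      · refine List.Nodup.append hp'.support_nodup (List.nodup_singleton _) ?_
        intro x hx1 hx2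
        simp at hx2
        subst hx2
        have := hb' _ hx1; simp at this
    · rw [SimpleGraph.Walk.support_cons, SimpleGraph.Walk.support_concat]
      simp [hl']; omega
    · intro v hv
      rw [SimpleGraph.Walk.support_cons, SimpleGraph.Walk.support_concat] at hv
      simp at hv
      rcases hv with h | h | h
      · simp [h]
      · have := hb' _ h; omega
      · simp [h]

lemma adjR' {m n : ℕ} {u v : RectV m n} (h : (R m n).Adj u v) :
    ((u:ℤ×ℤ).1-(v:ℤ×ℤ).1).natAbs + ((u:ℤ×ℤ).2-(v:ℤ×ℤ).2).natAbs = 1 := h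

/-- Dichotomy: a path ending at t=(sx,2) avoiding column sx (except t) stays on one side. -/
lemma dichotomy {m : ℕ} {sx : ℤ} :
    ∀ {u t : RectV m 2}, (t:ℤ×ℤ).1 = sx →
    ∀ (q : (R m 2).Walk u t), q.IsPath →
    (∀ v ∈ q.support, v ≠ t → (v:ℤ×ℤ).1 ≠ sx) →
    (∀ v ∈ q.support, v ≠ t → (v:ℤ×ℤ).1 < sx) ∨
    (∀ v ∈ q.support, v ≠ t → sx < (v:ℤ×ℤ).1) := by
  intro u t ht1 q
  induction q with
  | nil =>
    intro _ _
    left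
    intro v hv hne
    simp [SimpleGraph.Walk.support_nil] at hv
    exact absurd hv hne
  | @cons u v t h q' ih =>
    intro hp hcol
    have hp' : q'.IsPath := ((SimpleGraph.Walk.cons_isPath_iff _ _).1 hp).1
    have hu_not : u ∉ q'.support := ((SimpleGraph.Walk.cons_isPath_iff _ _).1 hp).2
    have hut : u ≠ t := by
      intro he; subst he; exact hu_not q'.end_mem_support
    have hux : (u:ℤ×ℤ).1 ≠ sx :=
      hcol u (by simp [SimpleGraph.Walk.support_cons]) hut
    have e := adjR' h
    by_cases hvt : v = t
    · -- q' is a path from t to t, hence nil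
      subst hvt
      have : q' = SimpleGraph.Walk.nil := SimpleGraph.Walk.isPath_iff_eq_nil.1 hp'
      subst this
      rcases lt_or_gt_of_ne hux with hlt | hgt
      · left
        intro w hw hne
        simp [SimpleGraph.Walk.support_cons, SimpleGraph.Walk.support_nil] at hw
        rcases hw with rfl | rfl
        · exact hlt
        · exact absurd rfl hne
      · right
        intro w hw hne
        simp [SimpleGraph.Walk.support_cons, SimpleGraph.Walk.support_nil] at hw
        rcases hw with rfl | rfl
        · exact hgt
        · exact absurd rfl hne
    · have hvx : (v:ℤ×ℤ).1 ≠ sx :=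
        hcol v (by simp [SimpleGraph.Walk.support_cons, q'.start_mem_support]) hvt
      have hcol' : ∀ w ∈ q'.support, w ≠ t → (w:ℤ×ℤ).1 ≠ sx := by
        intro w hw hne
        exact hcol w (by simp [SimpleGraph.Walk.support_cons, hw]) hne
      rcases ih ht1 hp' hcol' with hL | hR
      · left
        have hvlt : (v:ℤ×ℤ).1 < sx := hL v q'.start_mem_support hvt
        intro w hw hne
        rw [SimpleGraph.Walk.support_cons] at hw
        rcases List.mem_cons.1 hw with rfl | hw'
        · omega
        · exact hL w hw' hne
      · right
        have hvgt : sx < (v:ℤ×ℤ).1 := hR v q'.start_mem_support hvt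
        intro w hw hne
        rw [SimpleGraph.Walk.support_cons] at hw
        rcases List.mem_cons.1 hw with rfl | hw'
        · omega
        · exact hR w hw' hne

lemma count_le {m n : ℕ} (l : List (RectV m n)) (hnd : l.Nodup) (F : Finset (ℤ×ℤ))
    (h : ∀ v ∈ l, (v:ℤ×ℤ) ∈ F) : l.length ≤ F.card := by
  have hm : (l.map Subtype.val).Nodup := hnd.map Subtype.val_injective
  calc l.length = (l.map Subtype.val).length := by simp
    _ = (l.map Subtype.val).toFinset.card := (List.toFinset_card_of_nodup hm).symm
    _ ≤ F.card := by
        apply Finset.card_le_card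
        intro x hx
        rw [List.mem_toFinset, List.mem_map] at hx
        obtain ⟨v, hv, rfl⟩ := hx
        exact h v hv

lemma card_strip (a b : ℤ) :
    ((Finset.Icc a b ×ˢ Finset.Icc (1:ℤ) 2)).card = (b + 1 - a).toNat * 2 := by
  rw [Finset.card_product, Int.card_Icc, Int.card_Icc]
  rfl


/-- In `R(m,2)`, for s = (sx,1) and t = (tx,2) with sx = tx and 1 < sx < m,
the maximum number of vertices of a path from s to t equals
max(sx + tx, 2m − sx − tx + 2). -/
theorem longest_path_two_rectangle_split (m : ℕ) (sx tx : ℤ) (heq : sx = tx)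
    (h1 : 1 < sx) (h2 : sx < m)
    (hs : ((sx, (1 : ℤ))) ∈ RectV m 2) (ht : ((tx, (2 : ℤ))) ∈ RectV m 2) :
    IsGreatest {k : ℤ | ∃ p : (R m 2).Walk ⟨(sx, 1), hs⟩ ⟨(tx, 2), ht⟩,
        p.IsPath ∧ (p.support.length : ℤ) = k}
      (max (sx + tx) (2 * (m : ℤ) - sx - tx + 2)) := by


  subst heq
  constructor
  · -- membership: construct the longer of the two U-paths
    rcases le_or_gt (2*(m:ℤ) - sx - sx + 2) (sx + sx) with hc | hc
    · -- left path, length 2*sx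
      obtain ⟨w, hp, hl, -⟩ := leftU (m := m) (sx - 1).toNat sx (by omega) (by omega) hs ht
      refine ⟨w, hp, ?_⟩
      rw [max_eq_left hc, hl]
      push_cast
      omega
    · -- right path, length 2*(m - sx) + 2
      obtain ⟨w, hp, hl, -⟩ := rightU (m := m) (m - sx.toNat) sx (by omega) (by omega) hs ht
      refine ⟨w, hp, ?_⟩
      rw [max_eq_right (le_of_lt hc), hl]
      have : ((m - sx.toNat : ℕ) : ℤ) = (m : ℤ) - sx := by
        have : sx.toNat ≤ m := by omega
        push_cast [this]
        omega
      push_cast [this]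
      omega
  · -- upper bound
    rintro k ⟨p, hp, rfl⟩
    have hst : (⟨(sx,1),hs⟩ : RectV m 2) ≠ ⟨(sx,2),ht⟩ := by
      simp
    obtain ⟨v, h, q, rfl⟩ := p.exists_eq_cons_of_ne hst
    have hp' : q.IsPath := ((SimpleGraph.Walk.cons_isPath_iff _ _).1 hp).1
    have hs_not : (⟨(sx,1),hs⟩ : RectV m 2) ∉ q.support := ((SimpleGraph.Walk.cons_isPath_iff _ _).1 hp).2
    have hcol : ∀ w ∈ q.support, w ≠ ⟨(sx,2),ht⟩ → (w:ℤ×ℤ).1 ≠ sx := by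
      intro w hw hne hcontra
      obtain ⟨b1, b2, b3, b4⟩ := w.2
      have hval : (w : ℤ×ℤ) = ((w:ℤ×ℤ).1, (w:ℤ×ℤ).2) := rfl
      have hy : (w:ℤ×ℤ).2 = 1 ∨ (w:ℤ×ℤ).2 = 2 := by
        have : ((2:ℕ):ℤ) = 2 := by norm_num
        omega
      rcases hy with hy | hy
      · apply hs_not
        have : w = ⟨(sx,1),hs⟩ := Subtype.ext (by rw [hval, hcontra, hy])
        rwa [this] at hw
      · exact hne (Subtype.ext (by rw [hval, hcontra, hy]))
    have hlen : ((SimpleGraph.Walk.cons h q).support.length : ℤ) = 1 + q.support.length := by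
      rw [SimpleGraph.Walk.support_cons, List.length_cons]; push_cast; ring
    rw [hlen]
    rcases dichotomy (sx := sx) rfl q hp' hcol with hL | hR
    · -- all interior on the left: bound by sx + sx
      have hsub : ∀ w ∈ q.support, (w:ℤ×ℤ) ∈
          (Finset.Icc 1 (sx-1) ×ˢ Finset.Icc (1:ℤ) 2) ∪ {((sx,2) : ℤ×ℤ)} := by
        intro w hw
        by_cases hwt : w = ⟨(sx,2),ht⟩
        · subst hwt; simp
        · obtain ⟨b1, b2, b3, b4⟩ := w.2
          have hx := hL w hw hwt
          rw [Finset.mem_union, Finset.mem_product]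
          left
          constructor
          · rw [Finset.mem_Icc]; omega
          · rw [Finset.mem_Icc]
            have : ((2:ℕ):ℤ) = 2 := by norm_num
            omega
      have := count_le q.support hp'.support_nodup _ hsub
      have hcard : ((Finset.Icc 1 (sx-1) ×ˢ Finset.Icc (1:ℤ) 2) ∪ {((sx,2) : ℤ×ℤ)}).card
          ≤ (sx - 1).toNat * 2 + 1 := by
        calc _ ≤ _ := Finset.card_union_le _ _
          _ ≤ (sx-1).toNat * 2 + 1 := by rw [card_strip]; simp
      have hfin : q.support.length ≤ (sx-1).toNat * 2 + 1 := le_trans this hcard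
      have : (q.support.length : ℤ) ≤ ((sx-1).toNat * 2 + 1 : ℕ) := by exact_mod_cast hfin
      push_cast at this
      have h2sx : (q.support.length : ℤ) ≤ 2*sx - 1 := by omega
      exact le_trans (by omega) (le_max_left (sx+sx) _)
    · -- all interior on the right: bound by 2m - 2sx + 2
      have hsub : ∀ w ∈ q.support, (w:ℤ×ℤ) ∈
          (Finset.Icc (sx+1) m ×ˢ Finset.Icc (1:ℤ) 2) ∪ {((sx,2) : ℤ×ℤ)} := by
        intro w hw
        by_cases hwt : w = ⟨(sx,2),ht⟩
        · subst hwt; simp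
        · obtain ⟨b1, b2, b3, b4⟩ := w.2
          have hx := hR w hw hwt
          rw [Finset.mem_union, Finset.mem_product]
          left
          constructor
          · rw [Finset.mem_Icc]; omega
          · rw [Finset.mem_Icc]
            have : ((2:ℕ):ℤ) = 2 := by norm_num
            omega
      have := count_le q.support hp'.support_nodup _ hsub
      have hcard : ((Finset.Icc (sx+1) (m:ℤ) ×ˢ Finset.Icc (1:ℤ) 2) ∪ {((sx,2) : ℤ×ℤ)}).card
          ≤ ((m:ℤ) - sx).toNat * 2 + 1 := by
        calc _ ≤ _ := Finset.card_union_le _ _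
          _ ≤ ((m:ℤ)-sx).toNat * 2 + 1 := by rw [card_strip]; simp
      have hfin : q.support.length ≤ ((m:ℤ)-sx).toNat * 2 + 1 := le_trans this hcard
      have : (q.support.length : ℤ) ≤ (((m:ℤ)-sx).toNat * 2 + 1 : ℕ) := by exact_mod_cast hfin
      push_cast at this
      have : (q.support.length : ℤ) ≤ 2*((m:ℤ)-sx) + 1 := by omega
      exact le_trans (by omega) (le_max_right (sx+sx) _)
end
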